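/- arXiv:1608.01726 — 3 statements merged into one kernel-verified Lean document; each statement's English description precedes it below -/
import Mathlib

section
/- Pointwise form of the variational inequality: under the hypotheses of the previous statement (ū ∈ U_ad satisfying (p̄ + α(ū − ū_d), v − ū) ≥ 0 for all v ∈ U_ad with U_ad = {a ≤ v ≤ b a.e.}), for a.e. x ∈ Ω one has [p̄(x) + α(ū(x) − ū_d(x))]·[s − ū(x)] ≥ 0 for every s ∈ [a,b]. -/
open MeasureTheory

private lemma endpoint_aux {X : Type*} [MeasurableSpace X] {μ : Measure X} [IsFiniteMeasure μ]
    {a b c : ℝ} (hca : a ≤ c) (hcb : c ≤ b)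
    {g u : X → ℝ}
    (hg : MemLp g 2 μ) (hu : MemLp u 2 μ)
    (huad : ∀ᵐ x ∂μ, a ≤ u x ∧ u x ≤ b)
    (hVI : ∀ v : X → ℝ, MemLp v 2 μ → (∀ᵐ x ∂μ, a ≤ v x ∧ v x ≤ b) →
      0 ≤ ∫ x, g x * (v x - u x) ∂μ) :
    ∀ᵐ x ∂μ, 0 ≤ g x * (c - u x) := by
  -- measurable representatives
  set g' : X → ℝ := hg.aestronglyMeasurable.mk g with hg'def
  have hgg' : g =ᵐ[μ] g' := hg.aestronglyMeasurable.ae_eq_mk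
  have hg'm : StronglyMeasurable g' := hg.aestronglyMeasurable.stronglyMeasurable_mk
  set u' : X → ℝ := hu.aestronglyMeasurable.mk u with hu'def
  have huu' : u =ᵐ[μ] u' := hu.aestronglyMeasurable.ae_eq_mk
  have hu'm : StronglyMeasurable u' := hu.aestronglyMeasurable.stronglyMeasurable_mk
  set h : X → ℝ := fun x => g' x * (c - u' x) with hhdef
  have hhm : Measurable h := (hg'm.measurable.mul ((measurable_const.sub hu'm.measurable)))
  set E : Set X := {x | h x < 0} with hEdef
  have hEm : MeasurableSet E := measurableSet_lt hhm measurable_const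
  -- test function
  set v : X → ℝ := E.piecewise (fun _ => c) u' with hvdef
  have hvm : Measurable v := Measurable.piecewise hEm measurable_const hu'm.measurable
  have hvbd : ∀ᵐ x ∂μ, a ≤ v x ∧ v x ≤ b := by
    filter_upwards [huad, huu'] with x hx hxe
    by_cases hxE : x ∈ E
    · simp [hvdef, Set.piecewise, hxE, hca, hcb]
    · simp only [hvdef, Set.piecewise, hxE, if_false]
      rw [← hxe]; exact hx
  have hvL2 : MemLp v 2 μ := by
    refine MemLp.of_bound hvm.aestronglyMeasurable (max (max |a| |b|) |c|) ?_
    filter_upwards [hvbd] with x hx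
    rcases hx with ⟨h1, h2⟩
    rw [Real.norm_eq_abs, abs_le]
    constructor
    · calc -(max (max |a| |b|) |c|) ≤ -|a| := by
            simp only [neg_le_neg_iff]
            exact le_trans (le_max_left _ _) (le_max_left _ _)
          _ ≤ a := neg_abs_le a
          _ ≤ v x := h1
    · calc v x ≤ b := h2
          _ ≤ |b| := le_abs_self b
          _ ≤ max (max |a| |b|) |c| := le_trans (le_max_right _ _) (le_max_left _ _)
  have hint0 := hVI v hvL2 hvbd
  -- the integrand equals the indicator of E applied to h, a.e.
  have heq : (fun x => g x * (v x - u x)) =ᵐ[μ] E.indicator h := by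
    filter_upwards [hgg', huu'] with x hxg hxu
    by_cases hxE : x ∈ E
    · simp [hvdef, Set.piecewise, Set.indicator, hxE, hxg, hxu, hhdef]
    · simp [hvdef, Set.piecewise, Set.indicator, hxE, hxu]
  -- h is integrable
  have hg'L2 : MemLp g' 2 μ := hg.ae_eq hgg'
  have hcuL2 : MemLp (fun x => c - u' x) 2 μ :=
    (memLp_const c).sub (hu.ae_eq huu')
  have hhint : Integrable h μ := by
    rw [← memLp_one_iff_integrable]
    have := MemLp.smul (𝕜 := ℝ) (p := 2) (q := 2) (r := 1) hcuL2 hg'L2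
    simpa [hhdef, smul_eq_mul, Pi.mul_def] using this
  have hint1 : 0 ≤ ∫ x in E, h x ∂μ := by
    rw [← integral_indicator hEm, ← integral_congr_ae heq]
    exact hint0
  have hint2 : ∫ x in E, h x ∂μ ≤ 0 := by
    apply setIntegral_nonpos hEm
    intro x hx
    exact le_of_lt hx
  have hzero : ∫ x in E, (-h) x ∂μ = 0 := by
    simp only [Pi.neg_apply]
    rw [integral_neg]
    linarith [le_antisymm hint2 hint1]
  have hae0 : (-h) =ᵐ[μ.restrict E] 0 := by
    rw [← setIntegral_eq_zero_iff_of_nonneg_ae ?_ hhint.neg.integrableOn]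
    · exact hzero
    · rw [Filter.EventuallyLE, ae_restrict_iff' hEm]
      filter_upwards with x hx
      simp only [Pi.zero_apply, Pi.neg_apply, Left.nonneg_neg_iff]
      exact le_of_lt hx
  have hEnull : ∀ᵐ x ∂μ, x ∉ E := by
    have hae1 : ∀ᵐ x ∂μ, x ∈ E → (-h) x = (0 : X → ℝ) x :=
      (ae_restrict_iff' hEm).mp hae0
    filter_upwards [hae1] with x hx hxE
    have h1 : -h x = 0 := hx hxE
    have h2 : h x < 0 := hxE
    linarith
  filter_upwards [hEnull, hgg', huu'] with x hx hxg hxu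
  rw [hxg, hxu]
  simpa [hEdef, hhdef, not_lt] using hx

/-- Pointwise form of the variational inequality: if `ū ∈ U_ad` satisfies
`(p̄ + α(ū − ū_d), v − ū) ≥ 0` for all `v ∈ U_ad = {a ≤ v ≤ b a.e.}`, then for a.e. `x`
one has `(p̄(x) + α(ū(x) − ū_d(x)))(s − ū(x)) ≥ 0` for every `s ∈ [a,b]`. -/
theorem control_pointwise_variational_inequality (n : ℕ)
    (Ω : Set (EuclideanSpace ℝ (Fin n)))
    (hΩm : MeasurableSet Ω) (hΩb : Bornology.IsBounded Ω)
    (a b α : ℝ) (hab : a ≤ b) (hα : 0 < α)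
    (p ud u : EuclideanSpace ℝ (Fin n) → ℝ)
    (hp : MemLp p 2 (volume.restrict Ω)) (hud : MemLp ud 2 (volume.restrict Ω))
    (hu : MemLp u 2 (volume.restrict Ω))
    (huad : ∀ᵐ x ∂(volume.restrict Ω), a ≤ u x ∧ u x ≤ b)
    (hVI : ∀ v : EuclideanSpace ℝ (Fin n) → ℝ, MemLp v 2 (volume.restrict Ω) →
      (∀ᵐ x ∂(volume.restrict Ω), a ≤ v x ∧ v x ≤ b) →
      0 ≤ ∫ x, (p x + α * (u x - ud x)) * (v x - u x) ∂(volume.restrict Ω)) :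
    ∀ᵐ x ∂(volume.restrict Ω), ∀ s ∈ Set.Icc a b,
      0 ≤ (p x + α * (u x - ud x)) * (s - u x) := by
  haveI : IsFiniteMeasure (volume.restrict Ω) := by
    constructor
    rw [Measure.restrict_apply_univ]
    exact hΩb.measure_lt_top
  set μ := volume.restrict Ω
  set g : EuclideanSpace ℝ (Fin n) → ℝ := fun x => p x + α * (u x - ud x) with hgdef
  have hgL2 : MemLp g 2 μ := hp.add ((hu.sub hud).const_mul α)
  have ha : ∀ᵐ x ∂μ, 0 ≤ g x * (a - u x) :=
    endpoint_aux le_rfl hab hgL2 hu huad hVI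
  have hb : ∀ᵐ x ∂μ, 0 ≤ g x * (b - u x) :=
    endpoint_aux hab le_rfl hgL2 hu huad hVI
  filter_upwards [ha, hb] with x hxa hxb s hs
  rcases le_total 0 (g x) with hg0 | hg0
  · calc (0:ℝ) ≤ g x * (a - u x) := hxa
      _ ≤ g x * (s - u x) :=
        mul_le_mul_of_nonneg_left (by linarith [hs.1]) hg0
  · calc (0:ℝ) ≤ g x * (b - u x) := hxb
      _ ≤ g x * (s - u x) :=
        mul_le_mul_of_nonpos_left (by linarith [hs.2]) hg0
end

section
/- Sign property used in the superconvergence proof: with the hypotheses of the previous identity (a_D symmetric, the two discrete equations relating (ȳ_D − y_D(û)) and (p*_D(û) − p̄_D)), the quantity M₃ = (Π(p*_D(û) − p̄_D), ū_h − û) satisfies M₃ = −‖Π(ȳ_D − y_D(û))‖² ≤ 0. -/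
open MeasureTheory

/-- Sign property used in the superconvergence proof:
`M₃ = (Π(p*_D(û) − p̄_D), ū_h − û) = −‖Π(ȳ_D − y_D(û))‖² ≤ 0`. -/
theorem M3_sign_property (n : ℕ) (Ω : Set (EuclideanSpace ℝ (Fin n)))
    (hΩm : MeasurableSet Ω) (hΩb : Bornology.IsBounded Ω)
    (X : Type*) [AddCommGroup X] [Module ℝ X] [FiniteDimensional ℝ X]
    (PiD : X →ₗ[ℝ] Lp ℝ 2 (volume.restrict Ω))
    (aD : X →ₗ[ℝ] X →ₗ[ℝ] ℝ) (hsym : ∀ v w : X, aD v w = aD w v)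
    (ubh uhat : Lp ℝ 2 (volume.restrict Ω))
    (ybD yuD psD pbD : X)
    (h1 : ∀ w : X, aD (ybD - yuD) w = (inner ℝ (ubh - uhat) (PiD w) : ℝ))
    (h2 : ∀ w : X, aD w (psD - pbD) = (inner ℝ (PiD yuD - PiD ybD) (PiD w) : ℝ)) :
    (inner ℝ (PiD psD - PiD pbD) (ubh - uhat) : ℝ) = -‖PiD (ybD - yuD)‖ ^ 2 ∧
    (inner ℝ (PiD psD - PiD pbD) (ubh - uhat) : ℝ) ≤ 0 := by
  have key : (inner ℝ (PiD psD - PiD pbD) (ubh - uhat) : ℝ)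
      = -‖PiD (ybD - yuD)‖ ^ 2 := by
    have e1 := h1 (psD - pbD)
    have e2 := h2 (ybD - yuD)
    have hmap : PiD psD - PiD pbD = PiD (psD - pbD) := (map_sub PiD psD pbD).symm
    rw [hmap, real_inner_comm, ← e1, e2]
    have hmap2 : PiD yuD - PiD ybD = -(PiD (ybD - yuD)) := by
      rw [map_sub]; abel
    rw [hmap2, inner_neg_left, real_inner_self_eq_norm_sq]

  exact ⟨key, key ▸ neg_nonpos.mpr (sq_nonneg _)⟩
end

section
/- Basic control error estimate (abstract version): let H be a real Hilbert space, U_ad ⊂ H nonempty closed convex, U_h ⊂ H a closed subspace with orthogonal projection Pr_h satisfying Pr_h(U_ad) ⊂ U_ad ∩ U_h, and α > 0. Suppose ū ∈ U_ad and ū_h ∈ U_ad ∩ U_h satisfy (P̄ + α(ū − u_d), v − ū) ≥ 0 for all v ∈ U_ad and (P̄_h + α(ū_h − u_d), v_h − ū_h) ≥ 0 for all v_h ∈ U_ad ∩ U_h, for some P̄, P̄_h ∈ H, u_d ∈ H. Then α‖ū − ū_h‖² ≤ (P̄_h − P̄, ū − ū_h) − (P̄_h + α(ū_h − u_d), ū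 − Pr_h ū). -/
open MeasureTheory

/-- Basic control error estimate (abstract Hilbert space version):
`α‖ū − ū_h‖² ≤ (P̄_h − P̄, ū − ū_h) − (P̄_h + α(ū_h − u_d), ū − Pr_h ū)`. -/
theorem abstract_control_error_estimate (H : Type*) [NormedAddCommGroup H]
    [InnerProductSpace ℝ H] [CompleteSpace H]
    (Uad : Set H) (hne : Uad.Nonempty) (hcl : IsClosed Uad) (hconv : Convex ℝ Uad)
    (K : Submodule ℝ H) [K.HasOrthogonalProjection]
    (hproj : ∀ v ∈ Uad, (↑(K.orthogonalProjectionOnto v) : H) ∈ Uad ∩ (K : Set H))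
    (α : ℝ) (hα : 0 < α)
    (ubar ubarh : H) (hubar : ubar ∈ Uad) (hubarh : ubarh ∈ Uad ∩ (K : Set H))
    (P Ph udd : H)
    (hVI1 : ∀ v ∈ Uad, 0 ≤ (inner ℝ (P + α • (ubar - udd)) (v - ubar) : ℝ))
    (hVI2 : ∀ vh ∈ Uad ∩ (K : Set H),
      0 ≤ (inner ℝ (Ph + α • (ubarh - udd)) (vh - ubarh) : ℝ)) :
    α * ‖ubar - ubarh‖ ^ 2
      ≤ (inner ℝ (Ph - P) (ubar - ubarh) : ℝ)
        - (inner ℝ (Ph + α • (ubarh - udd))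
            (ubar - ↑(K.orthogonalProjectionOnto ubar)) : ℝ) := by
  have h1 := hVI1 ubarh hubarh.1
  have h2 := hVI2 _ (hproj ubar hubar)
  have hn : (inner ℝ (ubar - ubarh) (ubar - ubarh) : ℝ) = ‖ubar - ubarh‖ ^ 2 := by
    rw [real_inner_self_eq_norm_sq]
  simp only [inner_sub_left, inner_sub_right, inner_add_left, real_inner_smul_left,
    inner_smul_left, RCLike.ofReal_real_eq_id, id, conj_trivial] at *
  have hc : (inner ℝ ubarh ubar : ℝ) = inner ℝ ubar ubarh := real_inner_comm _ _
  rw [hc] at hn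
  have hn2 : α * ‖ubar - ubarh‖ ^ 2
      = α * ((inner ℝ ubar ubar : ℝ) - inner ℝ ubar ubarh - (inner ℝ ubar ubarh - inner ℝ ubarh ubarh)) := by
    rw [← hn]
  rw [hn2]
  have hc2 : α * (inner ℝ ubarh ubar : ℝ) = α * inner ℝ ubar ubarh := by rw [hc]
  ring_nf at h1 h2 hc2 ⊢
  linarith
end
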